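/- For every ℓ ≥ 3, there exists a Gray encoding g on ℓ bits (i.e., a bijection g : {0,1}^ℓ → {0,...,2^ℓ-1} such that whenever |g(s) - g(t)| = 1 the bitstrings s and t have Hamming distance 1) whose point locality is strictly greater than (2^ℓ - 1)/ℓ. -/

import Mathlib

namespace Subopt

def base3 (s : Fin 3 → Bool) : ℕ :=
  match s 0, s 1, s 2 with
  | false, false, false => 0
  | true,  false, false => 1
  | true,  true,  false => 2
  | true,  true,  true  => 3
  | true,  false, true  => 4
  | false, false, true  => 5
  | false, true,  true  => 6
  | false, true,  false => 7

def G : (n : ℕ) → (Fin (n+3) → Bool) → ℕ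
  | 0, s => base3 s
  | n+1, s => if s 0 then 2 ^ (n + 4) - 1 - G n (Fin.tail s) else G n (Fin.tail s)

lemma Glt : ∀ n (s : Fin (n+3) → Bool), G n s < 2 ^ (n+3)
  | 0, s => by revert s; decide
  | n+1, s => by
    have h := Glt n (Fin.tail s)
    have h2 : (2:ℕ) ^ (n+4) = 2 * 2 ^ (n+3) := by ring
    have h3 : (2:ℕ) ^ (n+1+3) = 2 ^ (n+4) := rfl
    unfold G
    split <;> omega

lemma Ginj : ∀ n, Function.Injective (G n)
  | 0 => by decide
  | n+1 => by
    intro s t h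
    have hs := Glt n (Fin.tail s)
    have ht := Glt n (Fin.tail t)
    have h2 : (2:ℕ) ^ (n+4) = 2 * 2 ^ (n+3) := by ring
    have key : s 0 = t 0 ∧ G n (Fin.tail s) = G n (Fin.tail t) := by
      unfold G at h
      rcases hb : s 0 <;> rcases hc : t 0 <;> simp [hb, hc] at h ⊢ <;> omega
    have htail : Fin.tail s = Fin.tail t := Ginj n key.2
    funext i
    refine Fin.cases key.1 (fun j => ?_) i
    exact congrFun htail j

lemma ham_succ {k : ℕ} (s t : Fin (k+1) → Bool) :
    hammingDist s t = (if s 0 = t 0 then 0 else 1) + hammingDist (Fin.tail s) (Fin.tail t) := by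
  simp only [hammingDist, Finset.card_filter, Fin.sum_univ_succ, Fin.tail]
  congr 1
  by_cases h : s 0 = t 0 <;> simp [h]
  exact (Finset.card_filter _ _).symm

lemma Ggray' : ∀ n (s t : Fin (n+3) → Bool), G n s = G n t + 1 → hammingDist s t = 1
  | 0 => by decide
  | n+1 => by
    intro s t h
    have hs := Glt n (Fin.tail s)
    have ht := Glt n (Fin.tail t)
    have h2 : (2:ℕ) ^ (n+4) = 2 * 2 ^ (n+3) := by ring
    unfold G at h
    rw [ham_succ]
    rcases hb : s 0 <;> rcases hc : t 0 <;> simp [hb, hc] at h ⊢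
    · -- both false
      exact Ggray' n _ _ h
    · -- s 0 = false, t 0 = true : impossible
      omega
    · -- s 0 = true, t 0 = false : boundary
      have hteq : G n (Fin.tail s) = G n (Fin.tail t) := by omega
      have : Fin.tail s = Fin.tail t := Ginj n hteq
      simp [this]
    · -- both true
      have : G n (Fin.tail t) = G n (Fin.tail s) + 1 := by omega
      rw [hammingDist_comm]
      exact Ggray' n _ _ this

lemma oddsum (K : ℕ) : ∑ k : Fin K, (2*K - 1 - 2*(k:ℕ)) = K*K := by
  induction K with
  | zero => simp
  | succ K ih =>
    rw [Fin.sum_univ_castSucc]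
    have h : ∀ k : Fin K, 2*(K+1) - 1 - 2*((k.castSucc : Fin (K+1)) : ℕ) = (2*K - 1 - 2*(k:ℕ)) + 2 := by
      intro k; have := k.isLt; simp only [Fin.coe_castSucc]; omega
    rw [Finset.sum_congr rfl (fun k _ => h k), Finset.sum_add_distrib, ih]
    simp only [Fin.val_last, Finset.sum_const, Finset.card_univ, Fintype.card_fin, smul_eq_mul]
    have h2 : (K+1)*(K+1) = K*K + 2*K + 1 := by ring
    omega

lemma sum_over_G (n : ℕ) (φ : ℕ → ℕ) :
    ∑ t : Fin (n+3) → Bool, φ (G n t) = ∑ k : Fin (2^(n+3)), φ (k : ℕ) := by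
  have hbij : Function.Bijective (fun t : Fin (n+3) → Bool => (⟨G n t, Glt n t⟩ : Fin (2^(n+3)))) := by
    rw [Fintype.bijective_iff_injective_and_card]
    constructor
    · intro a b h
      exact Ginj n (by simpa using congrArg Fin.val h)
    · simp
  exact hbij.sum_comp (fun k => φ (k : ℕ))

lemma cons_update_zero {m : ℕ} (b x : Bool) (t : Fin m → Bool) :
    Function.update (Fin.cons b t : Fin (m+1) → Bool) 0 x = Fin.cons x t := by
  exact @Fin.update_cons_zero m (fun _ => Bool) b t x

lemma cons_update_succ {m : ℕ} (b x : Bool) (t : Fin m → Bool) (i : Fin m) :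
    Function.update (Fin.cons b t : Fin (m+1) → Bool) i.succ x
      = Fin.cons b (Function.update t i x) := by
  exact (@Fin.cons_update m (fun _ => Bool) b t i x).symm

lemma Gcons_false (n : ℕ) (t : Fin (n+3) → Bool) :
    G (n+1) (Fin.cons false t : Fin (n+4) → Bool) = G n t := by
  simp [G, Fin.tail_cons]

lemma Gcons_true (n : ℕ) (t : Fin (n+3) → Bool) :
    G (n+1) (Fin.cons true t : Fin (n+4) → Bool) = 2 ^ (n+4) - 1 - G n t := by
  simp [G, Fin.tail_cons]

lemma Gsum : ∀ n, (∑ s : Fin (n+3) → Bool, ∑ i : Fin (n+3),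
    ((G n (Function.update s i (!s i)) : ℤ) - (G n s : ℤ)).natAbs) + 2^(n+3)
    = 4^(n+3) + 2^(n+2)
  | 0 => by decide
  | n+1 => by
    have ih := Gsum n
    rw [← ((Fin.consEquiv (fun _ : Fin (n+4) => Bool)).sum_comp
      (fun s => ∑ i : Fin (n+1+3), ((G (n+1) (Function.update s i (!s i)) : ℤ) - (G (n+1) s : ℤ)).natAbs))]
    rw [Fintype.sum_prod_type]
    have key : ∀ (b : Bool) (t : Fin (n+3) → Bool),
        (∑ i : Fin (n+1+3), ((G (n+1) (Function.update (Fin.cons b t : Fin (n+4) → Bool) i (!((Fin.cons b t : Fin (n+4) → Bool) i))) : ℤ)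
          - (G (n+1) (Fin.cons b t : Fin (n+4) → Bool) : ℤ)).natAbs)
        = (2^(n+4) - 1 - 2 * G n t)
          + ∑ i : Fin (n+3), ((G n (Function.update t i (!t i)) : ℤ) - (G n t : ℤ)).natAbs := by
      intro b t
      clear ih
      rw [Fin.sum_univ_succ]
      have ha := Glt n t
      have h2 : (2:ℕ) ^ (n+4) = 2 * 2 ^ (n+3) := by ring
      congr 1
      · -- the bit-0 term
        cases b
        · have h0 : Function.update (Fin.cons false t : Fin (n+4) → Bool) 0 (!((Fin.cons false t : Fin (n+4) → Bool) 0)) = Fin.cons true t := by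
            rw [Fin.cons_zero]; exact @Fin.update_cons_zero (n+3) (fun _ => Bool) false t true
          rw [h0, Gcons_true, Gcons_false]; omega
        · have h0 : Function.update (Fin.cons true t : Fin (n+4) → Bool) 0 (!((Fin.cons true t : Fin (n+4) → Bool) 0)) = Fin.cons false t := by
            rw [Fin.cons_zero]; exact @Fin.update_cons_zero (n+3) (fun _ => Bool) true t false
          rw [h0, Gcons_true, Gcons_false]; omega
      · -- the rest
        refine Finset.sum_congr rfl (fun i _ => ?_)
        have hb := Glt n (Function.update t i (!t i))
        have h1 : Function.update (Fin.cons b t : Fin (n+4) → Bool) i.succ (!((Fin.cons b t : Fin (n+4) → Bool) i.succ))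
            = Fin.cons b (Function.update t i (!t i)) := by
          rw [Fin.cons_succ]; exact (@Fin.cons_update (n+3) (fun _ => Bool) b t i (!t i)).symm
        rw [h1]
        cases b
        · rw [Gcons_false, Gcons_false]
        · rw [Gcons_true, Gcons_true]; omega
    show (∑ b : Bool, ∑ t : Fin (n+3) → Bool,
        ∑ i : Fin (n+1+3), ((G (n+1) (Function.update (Fin.cons b t : Fin (n+4) → Bool) i (!((Fin.cons b t : Fin (n+4) → Bool) i))) : ℤ)
          - (G (n+1) (Fin.cons b t : Fin (n+4) → Bool) : ℤ)).natAbs) + 2^(n+1+3) = 4^(n+1+3) + 2^(n+1+2)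
    simp only [key]
    have hD : ∑ t : Fin (n+3) → Bool, (2^(n+4) - 1 - 2 * G n t) = 4 ^ (n+3) := by
      rw [sum_over_G n (fun a => 2^(n+4) - 1 - 2*a)]
      have h2 : (2:ℕ) ^ (n+4) = 2 * 2 ^ (n+3) := by ring
      have h4 : (4:ℕ) ^ (n+3) = 2 ^ (n+3) * 2 ^ (n+3) := by
        rw [show (4:ℕ) = 2*2 from rfl, mul_pow]
      rw [h2, h4, ← oddsum (2^(n+3))]
    simp only [Finset.sum_add_distrib, hD]
    generalize hX : (∑ s : Fin (n+3) → Bool, ∑ i : Fin (n+3),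
      ((G n (Function.update s i (!s i)) : ℤ) - (G n s : ℤ)).natAbs) = X at ih ⊢
    simp only [Finset.sum_const, Finset.card_univ, Fintype.card_bool, smul_eq_mul]
    clear key hD hX
    have h2'' : (2:ℕ) ^ (n+3) = 2 * 2 ^ (n+2) := by ring
    have h2 : (2:ℕ) ^ (n+1+3) = 2 * 2 ^ (n+3) := by ring
    have h2' : (2:ℕ) ^ (n+1+2) = 2 * 2 ^ (n+2) := by ring
    have h4 : (4:ℕ) ^ (n+1+3) = 4 * 4 ^ (n+3) := by ring
    omega

end Subopt

/-- For every `ℓ ≥ 3` there exists a Gray encoding (a bijection from ℓ-bit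
bitstrings to `{0,...,2^ℓ-1}` under which integers at distance 1 have
representations at Hamming distance 1) with point locality strictly greater
than the optimum `(2^ℓ - 1)/ℓ`. -/
theorem exists_suboptimal_gray (ℓ : ℕ) (hℓ : 3 ≤ ℓ) :
    ∃ g : (Fin ℓ → Bool) ≃ Fin (2 ^ ℓ),
      (∀ s t : Fin ℓ → Bool,
          (((g s : ℕ) : ℤ) - ((g t : ℕ) : ℤ)).natAbs = 1 → hammingDist s t = 1) ∧
      ((∑ s : Fin ℓ → Bool, ∑ i : Fin ℓ,
          (((g (Function.update s i (!s i)) : ℕ) : ℤ) - ((g s : ℕ) : ℤ)).natAbs : ℚ))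
          / (ℓ * 2 ^ ℓ)
        > (2 ^ ℓ - 1) / ℓ := by
  obtain ⟨n, rfl⟩ : ∃ n, ℓ = n + 3 := ⟨ℓ - 3, by omega⟩
  have hbij : Function.Bijective
      (fun s : Fin (n+3) → Bool => (⟨Subopt.G n s, Subopt.Glt n s⟩ : Fin (2^(n+3)))) := by
    rw [Fintype.bijective_iff_injective_and_card]
    exact ⟨fun a b h => Subopt.Ginj n (by simpa using congrArg Fin.val h), by simp⟩
  set g : (Fin (n+3) → Bool) ≃ Fin (2^(n+3)) := Equiv.ofBijective _ hbij with hg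
  have hval : ∀ u, ((g u : Fin (2^(n+3))) : ℕ) = Subopt.G n u := fun u => rfl
  refine ⟨g, ?_, ?_⟩
  · intro s t h
    rw [hval, hval] at h
    have hcase : Subopt.G n s = Subopt.G n t + 1 ∨ Subopt.G n t = Subopt.G n s + 1 := by omega
    rcases hcase with hc | hc
    · exact Subopt.Ggray' n s t hc
    · rw [hammingDist_comm]; exact Subopt.Ggray' n t s hc
  · simp only [hval]
    have hcast : (∑ s : Fin (n+3) → Bool, ∑ i : Fin (n+3),
        ((((Subopt.G n (Function.update s i (!s i)) : ℤ) - (Subopt.G n s : ℤ)).natAbs : ℚ)))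
        = (((∑ s : Fin (n+3) → Bool, ∑ i : Fin (n+3),
        ((Subopt.G n (Function.update s i (!s i)) : ℤ) - (Subopt.G n s : ℤ)).natAbs) : ℕ) : ℚ) := by
      push_cast
      rfl
    rw [hcast]
    have hG := Subopt.Gsum n
    generalize hX : (∑ s : Fin (n+3) → Bool, ∑ i : Fin (n+3),
        ((Subopt.G n (Function.update s i (!s i)) : ℤ) - (Subopt.G n s : ℤ)).natAbs) = X at hG ⊢
    have hGq : (X : ℚ) + 2^(n+3) = 4^(n+3) + 2^(n+2) := by
      have := congrArg (Nat.cast : ℕ → ℚ) hG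
      push_cast at this
      linarith [this]
    have hN : (0:ℚ) < ((n:ℚ)+3) := by positivity
    have hP : (0:ℚ) < 2^(n+3) := by positivity
    have hQ : (0:ℚ) < 2^(n+2) := by positivity
    have h4 : (4:ℚ)^(n+3) = 2^(n+3) * 2^(n+3) := by
      rw [show (4:ℚ) = 2*2 by norm_num, mul_pow]
    have h22 : (2:ℚ)^(n+3) = 2 * 2^(n+2) := by ring
    rw [gt_iff_lt, div_lt_div_iff₀ (by positivity) (by positivity)]
    push_cast
    nlinarith [mul_pos hN hQ, mul_pos hN hP]
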